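/- Let T be a tree with m edges, with proper 2-colouring classes T_A and T_B where T_B contains a leaf, and with edges coloured bijectively by {1,…,m}. Let G be a bipartite graph on vertex classes A and B. If G admits a T-equitable edge-colouring with colours 1,…,m, then G has a T*-decomposition. -/
import Mathlib


/-- A loopless multigraph on vertex type `V` with edge type `E`. -/
structure Multigraph (V : Type) (E : Type) where
  ends : E → Sym2 V
  loopless : ∀ e, ¬ (ends e).IsDiag

namespace Multigraph

variable {V E : Type}

/-- Degree of a vertex. -/
noncomputable def deg (G : Multigraph V E) (v : V) : ℕ :=
  Nat.card {e : E // v ∈ G.ends e}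

/-- Degree of a vertex in the spanning subgraph with edge set `H`. -/
noncomputable def degOn (G : Multigraph V E) (H : Set E) (v : V) : ℕ :=
  Nat.card {e : E // e ∈ H ∧ v ∈ G.ends e}

/-- Degree of `v` in colour `j` under the edge-colouring `c`. -/
noncomputable def degCol {C : Type} (G : Multigraph V E) (c : E → C) (j : C) (v : V) : ℕ :=
  Nat.card {e : E // c e = j ∧ v ∈ G.ends e}

/-- Adjacency using only edges from `F`. -/
def Adj (G : Multigraph V E) (F : Set E) (v w : V) : Prop :=
  ∃ e ∈ F, G.ends e = s(v, w)

/-- The spanning subgraph with edge set `F` is connected (on all of `V`). -/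
def ConnectedOn (G : Multigraph V E) (F : Set E) : Prop :=
  ∀ v w : V, Relation.ReflTransGen (G.Adj F) v w

/-- `G` is connected. -/
def Connected (G : Multigraph V E) : Prop := G.ConnectedOn Set.univ

/-- `G` is `k`-edge-connected: removing fewer than `k` edges leaves it connected. -/
def EdgeConnected (G : Multigraph V E) (k : ℕ) : Prop :=
  ∀ F : Finset E, F.card < k → G.ConnectedOn {e | e ∉ F}

/-- The spanning subgraph with edge set `H` is `k`-edge-connected. -/
def EdgeConnectedOn (G : Multigraph V E) (H : Set E) (k : ℕ) : Prop :=
  ∀ F : Finset E, ↑F ⊆ H → F.card < k → G.ConnectedOn (H \ ↑F)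

/-- `S` is the edge set of a spanning tree of `G`. -/
def IsSpanningTree (G : Multigraph V E) (S : Set E) : Prop :=
  G.ConnectedOn S ∧ Nat.card S + 1 = Nat.card V

/-- `G` is a tree (connected with one fewer edge than vertices). -/
def IsTree (G : Multigraph V E) : Prop :=
  G.Connected ∧ Nat.card E + 1 = Nat.card V

/-- `H` is a homomorphic copy of `G`: it is obtained from `G` by identifying vertices,
keeping all edges (the vertex map is surjective and induces a bijection on edges). -/
def IsHomCopy {V' E' : Type} (G : Multigraph V E) (H : Multigraph V' E') : Prop :=
  ∃ (f : V → V') (g : E ≃ E'), Function.Surjective f ∧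
    ∀ e, H.ends (g e) = (G.ends e).map f

/-- `G` and `H` are isomorphic multigraphs. -/
def IsIsomorphic {V' E' : Type} (G : Multigraph V E) (H : Multigraph V' E') : Prop :=
  ∃ (f : V ≃ V') (g : E ≃ E'), ∀ e, H.ends (g e) = (G.ends e).map f

/-- The edge set `S` of `G` forms a subgraph which is a homomorphic copy of `T`. -/
def IsHomCopyOn {VT ET : Type} (T : Multigraph VT ET) (G : Multigraph V E) (S : Set E) : Prop :=
  ∃ (f : VT → V) (g : ET ≃ S), ∀ e, G.ends (g e) = (T.ends e).map f

/-- The edge set `S` of `G` forms a subgraph isomorphic to `T`. -/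
def IsIsoCopyOn {VT ET : Type} (T : Multigraph VT ET) (G : Multigraph V E) (S : Set E) : Prop :=
  ∃ (f : VT → V) (g : ET ≃ S), Function.Injective f ∧
    ∀ e, G.ends (g e) = (T.ends e).map f

/-- `A`, `B` form a bipartition of `G`. -/
def IsBipartition (G : Multigraph V E) (A B : Set V) : Prop :=
  Disjoint A B ∧ A ∪ B = Set.univ ∧ ∀ e : E, ∃ a ∈ A, ∃ b ∈ B, G.ends e = s(a, b)

/-- A `T*`-decomposition: a partition of the edge set of `G` into homomorphic copies of `T`. -/
def HomCopyDecomposition {VT ET : Type} (T : Multigraph VT ET) (G : Multigraph V E) : Prop :=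
  ∃ P : Set (Set E), Setoid.IsPartition P ∧ ∀ S ∈ P, T.IsHomCopyOn G S

/-- A `T`-decomposition: a partition of the edge set of `G` into copies isomorphic to `T`. -/
def IsoCopyDecomposition {VT ET : Type} (T : Multigraph VT ET) (G : Multigraph V E) : Prop :=
  ∃ P : Set (Set E), Setoid.IsPartition P ∧ ∀ S ∈ P, T.IsIsoCopyOn G S

/-- There is a walk of length `n` from `v` to `w` in `G`. -/
def WalkLen (G : Multigraph V E) (n : ℕ) (v w : V) : Prop :=
  ∃ (p : Fin (n + 1) → V) (e : Fin n → E), p 0 = v ∧ p (Fin.last n) = w ∧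
    ∀ i : Fin n, G.ends (e i) = s(p i.castSucc, p i.succ)

/-- Graph distance. -/
noncomputable def dist (G : Multigraph V E) (v w : V) : ℕ :=
  sInf {n | G.WalkLen n v w}

/-- Diameter of a finite graph. -/
noncomputable def diam (G : Multigraph V E) [Fintype V] : ℕ :=
  Finset.univ.sup fun p : V × V => G.dist p.1 p.2

/-- `G` contains a cycle of length `n`. -/
def HasCycleOfLength (G : Multigraph V E) (n : ℕ) : Prop :=
  2 ≤ n ∧ ∃ (v : ZMod n → V) (e : ZMod n → E), Function.Injective v ∧ Function.Injective e ∧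
    ∀ i, G.ends (e i) = s(v i, v (i + 1))

end Multigraph

namespace MGAux
open Multigraph

variable {V E : Type}

lemma sym2_cases (x : Sym2 V) : ∃ a b, x = s(a, b) := by
  induction x using Sym2.inductionOn with
  | _ a b => exact ⟨a, b, rfl⟩

lemma bipartition_symm {G : Multigraph V E} {A B : Set V} (h : G.IsBipartition A B) :
    G.IsBipartition B A := by
  obtain ⟨h1, h2, h3⟩ := h
  refine ⟨h1.symm, by rw [Set.union_comm]; exact h2, fun e => ?_⟩
  obtain ⟨a, ha, b, hb, hab⟩ := h3 e
  exact ⟨b, hb, a, ha, by rw [hab, Sym2.eq_swap]⟩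

lemma deg_sum [Fintype V] [Fintype E] (G : Multigraph V E) :
    ∑ v, G.deg v = 2 * Fintype.card E := by
  classical
  have hdeg : ∀ v, G.deg v = (Finset.univ.filter (fun e => v ∈ G.ends e)).card := by
    intro v
    rw [deg, Nat.card_eq_fintype_card, Fintype.card_subtype]
  calc ∑ v, G.deg v = ∑ v, ∑ e : E, (if v ∈ G.ends e then 1 else 0) := by
        refine Finset.sum_congr rfl fun v _ => ?_
        rw [hdeg, Finset.card_filter]
    _ = ∑ e : E, ∑ v : V, (if v ∈ G.ends e then 1 else 0) := Finset.sum_comm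
    _ = ∑ e : E, 2 := by
        refine Finset.sum_congr rfl fun e _ => ?_
        obtain ⟨a, b, hab⟩ := sym2_cases (G.ends e)
        have hne : a ≠ b := by
          intro h; exact G.loopless e (by rw [hab, h]; exact Sym2.mk_isDiag_iff.2 rfl)
        rw [← Finset.card_filter]
        have : Finset.univ.filter (fun v => v ∈ G.ends e) = {a, b} := by
          ext v; simp [hab, Sym2.mem_iff]
        rw [this, Finset.card_pair hne]
    _ = 2 * Fintype.card E := by simp [Finset.card_univ, mul_comm]

lemma deg_pos [Fintype V] [Fintype E] (G : Multigraph V E) (hconn : G.Connected)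
    (h2 : 2 ≤ Fintype.card V) (v : V) : 1 ≤ G.deg v := by
  classical
  obtain ⟨w, hw⟩ := Fintype.exists_ne_of_one_lt_card h2 v
  rcases (hconn v w).cases_head with h | ⟨x, ⟨e, _, he⟩, _⟩
  · exact absurd h.symm hw
  · have : v ∈ G.ends e := by rw [he]; exact Sym2.mem_mk_left v x
    have : Nonempty {e : E // v ∈ G.ends e} := ⟨⟨e, this⟩⟩
    rw [deg]
    exact Nat.one_le_iff_ne_zero.2 (Nat.card_ne_zero.2 ⟨this, inferInstance⟩)

lemma exists_leaf [Fintype V] [Fintype E] (G : Multigraph V E) (hT : G.IsTree)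
    (hE : 1 ≤ Fintype.card E) : ∃ t, G.deg t = 1 := by
  classical
  obtain ⟨hconn, hcard⟩ := hT
  rw [Nat.card_eq_fintype_card, Nat.card_eq_fintype_card] at hcard
  have h2 : 2 ≤ Fintype.card V := by omega
  by_contra h
  push_neg at h
  have hge : ∀ v, 2 ≤ G.deg v := by
    intro v
    have := deg_pos G hconn h2 v
    have := h v
    omega
  have : 2 * Fintype.card V ≤ ∑ v, G.deg v := by
    calc 2 * Fintype.card V = ∑ _v : V, 2 := by simp [Finset.card_univ, mul_comm]
    _ ≤ ∑ v, G.deg v := Finset.sum_le_sum (fun v _ => hge v)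
  rw [deg_sum] at this
  omega

end MGAux

namespace MGAux
open Multigraph

def Stmt (n : ℕ) : Prop :=
  ∀ {VT ET V E : Type} [Fintype VT] [Fintype ET] [Fintype V] [Fintype E]
    (T : Multigraph VT ET) (TA TB : Set VT) (G : Multigraph V E) (A B : Set V),
    Fintype.card ET = n → T.IsTree → T.IsBipartition TA TB → G.IsBipartition A B →
    ∀ c : E → ET,
    (∀ v ∈ A, ∀ t ∈ TA, ∀ j k, t ∈ T.ends j → t ∈ T.ends k →
        G.degCol c j v = G.degCol c k v) →
    (∀ v ∈ B, ∀ t ∈ TB, ∀ j k, t ∈ T.ends j → t ∈ T.ends k →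
        G.degCol c j v = G.degCol c k v) →
    ∃ P : Set (Set E), Setoid.IsPartition P ∧ ∀ S ∈ P,
      ∃ (f : VT → V) (g : ET ≃ S), (∀ t ∈ TA, f t ∈ A) ∧ (∀ t ∈ TB, f t ∈ B) ∧
        (∀ e, c (g e).1 = e) ∧ ∀ e, G.ends (g e).1 = (T.ends e).map f

lemma stmt_zero : Stmt 0 := by
  intro VT ET V E _ _ _ _ T TA TB G A B hcard _ _ _ c _ _
  have hET : IsEmpty ET := Fintype.card_eq_zero_iff.1 hcard
  have hE : IsEmpty E := ⟨fun e => hET.false (c e)⟩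
  refine ⟨∅, ⟨fun h => h, fun e => hE.elim e⟩, fun S hS => hS.elim⟩

lemma stmt_singleton {VT ET V E : Type} [Fintype VT] [Fintype ET] [Fintype V] [Fintype E]
    (T : Multigraph VT ET) (TA TB : Set VT) (G : Multigraph V E) (A B : Set V)
    (hcard : Fintype.card ET = 1) (hT : T.IsTree) (hTbip : T.IsBipartition TA TB)
    (hGbip : G.IsBipartition A B) (c : E → ET) :
    ∃ P : Set (Set E), Setoid.IsPartition P ∧ ∀ S ∈ P,
      ∃ (f : VT → V) (g : ET ≃ S), (∀ t ∈ TA, f t ∈ A) ∧ (∀ t ∈ TB, f t ∈ B) ∧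
        (∀ e, c (g e).1 = e) ∧ ∀ e, G.ends (g e).1 = (T.ends e).map f := by
  classical
  obtain ⟨j₀, hj₀⟩ := Fintype.card_eq_one_iff.1 hcard
  obtain ⟨a₀, ha₀, b₀, hb₀, hends⟩ := hTbip.2.2 j₀
  have hne : a₀ ≠ b₀ := fun h => T.loopless j₀ (by rw [hends, Sym2.mk_isDiag_iff]; exact h)
  have hall : ∀ t : VT, t = a₀ ∨ t = b₀ := by
    intro t
    by_contra h
    push_neg at h
    have hVT2 : Fintype.card VT = 2 := by
      have := hT.2
      rw [Nat.card_eq_fintype_card, Nat.card_eq_fintype_card, hcard] at this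
      omega
    have h3 : ({a₀, b₀, t} : Finset VT).card = 3 := by
      rw [Finset.card_insert_of_notMem (by
        simp only [Finset.mem_insert, Finset.mem_singleton]
        push_neg
        exact ⟨hne, Ne.symm h.1⟩), Finset.card_pair (Ne.symm h.2)]
    have := Finset.card_le_univ ({a₀, b₀, t} : Finset VT)
    rw [h3, hVT2] at this
    omega
  refine ⟨{S | ∃ e : E, S = {e}}, ⟨fun h => ?_, fun e => ?_⟩, fun S hS => ?_⟩
  · obtain ⟨e, he⟩ := h
    exact (Set.singleton_ne_empty e) he.symm
  · refine ⟨{e}, ⟨⟨e, rfl⟩, rfl⟩, ?_⟩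
    rintro S ⟨⟨e', rfl⟩, he⟩
    rw [Set.mem_singleton_iff.1 he]
  · obtain ⟨e, rfl⟩ := hS
    obtain ⟨a, ha, b, hb, hab⟩ := hGbip.2.2 e
    refine ⟨fun t => if t = b₀ then b else a,
      ⟨fun _ => ⟨e, rfl⟩, fun _ => j₀, fun k => (hj₀ k).symm,
        fun x => Subtype.ext (Set.mem_singleton_iff.1 x.2).symm⟩, ?_, ?_, ?_, ?_⟩
    · intro t ht
      have hne' : t ≠ b₀ := fun h => Set.disjoint_left.1 hTbip.1 ht (h ▸ hb₀)
      simpa [hne'] using ha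
    · intro t ht
      rcases hall t with h | h
      · exact absurd ht (h ▸ Set.disjoint_left.1 hTbip.1 ha₀)
      · simpa [h] using hb
    · intro k
      exact (hj₀ (c e)).trans (hj₀ k).symm
    · intro k
      rw [hj₀ k, hends, Sym2.map_pair_eq]
      simp only [Equiv.coe_fn_mk, if_neg hne, if_pos]
      simpa using hab

end MGAux

namespace MGAux
open Multigraph

lemma step_core (n : ℕ) (ih : Stmt n)
    {VT ET V E : Type} [Fintype VT] [Fintype ET] [Fintype V] [Fintype E]
    (T : Multigraph VT ET) (TA TB : Set VT) (G : Multigraph V E) (A B : Set V)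
    (hcard : Fintype.card ET = n + 1) (hT : T.IsTree) (hTbip : T.IsBipartition TA TB)
    (hGbip : G.IsBipartition A B) (t₀ : VT) (ht₀ : t₀ ∈ TB) (hdeg : T.deg t₀ = 1)
    (c : E → ET)
    (hA : ∀ v ∈ A, ∀ t ∈ TA, ∀ j k, t ∈ T.ends j → t ∈ T.ends k →
        G.degCol c j v = G.degCol c k v)
    (hB : ∀ v ∈ B, ∀ t ∈ TB, ∀ j k, t ∈ T.ends j → t ∈ T.ends k →
        G.degCol c j v = G.degCol c k v) :
    ∃ P : Set (Set E), Setoid.IsPartition P ∧ ∀ S ∈ P,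
      ∃ (f : VT → V) (g : ET ≃ S), (∀ t ∈ TA, f t ∈ A) ∧ (∀ t ∈ TB, f t ∈ B) ∧
        (∀ e, c (g e).1 = e) ∧ ∀ e, G.ends (g e).1 = (T.ends e).map f := by
  classical
  rcases Nat.eq_zero_or_pos n with hn | hn
  · subst hn
    exact stmt_singleton T TA TB G A B hcard hT hTbip hGbip c
  -- extract the leaf edge j₀ and the neighbour s of t₀
  have hdeg' : Fintype.card {e // t₀ ∈ T.ends e} = 1 := by
    have : Nat.card {e // t₀ ∈ T.ends e} = 1 := hdeg
    rwa [Nat.card_eq_fintype_card] at this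
  obtain ⟨⟨j₀, hj₀mem⟩, huniq'⟩ := Fintype.card_eq_one_iff.1 hdeg'
  have huniq : ∀ e, t₀ ∈ T.ends e → e = j₀ := fun e he =>
    congrArg Subtype.val (huniq' ⟨e, he⟩)
  obtain ⟨s, hsA, b₀, hb₀, hj₀ends'⟩ := hTbip.2.2 j₀
  have ht₀b : t₀ = b₀ := by
    have := hj₀mem
    rw [hj₀ends', Sym2.mem_iff] at this
    rcases this with h | h
    · exact absurd (h ▸ hsA) (Set.disjoint_right.1 hTbip.1 ht₀)
    · exact h
  have hj₀ends : T.ends j₀ = s(s, t₀) := by rw [hj₀ends', ht₀b]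
  have hst₀ : s ≠ t₀ := by
    intro h
    exact T.loopless j₀ (by rw [hj₀ends, h, Sym2.mk_isDiag_iff])
  have hnotin : ∀ e : ET, e ≠ j₀ → t₀ ∉ T.ends e := fun e hne he => hne (huniq e he)
  -- the reduced tree T'
  set h : VT → {t : VT // t ≠ t₀} := fun t => if ht : t = t₀ then ⟨s, hst₀⟩ else ⟨t, ht⟩ with hh
  have hval : ∀ (t : VT) (ht : t ≠ t₀), h t = ⟨t, ht⟩ := fun t ht => dif_neg ht
  have hvalt₀ : h t₀ = ⟨s, hst₀⟩ := dif_pos rfl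
  set T' : Multigraph {t : VT // t ≠ t₀} {e : ET // e ≠ j₀} :=
    ⟨fun e => (T.ends e.1).map h, by
      rintro ⟨e, hne⟩ hdiag
      obtain ⟨x, y, hxy⟩ := sym2_cases (T.ends e)
      have hx : x ≠ t₀ := by
        rintro rfl
        exact hnotin e hne (by rw [hxy]; exact Sym2.mem_mk_left x y)
      have hy : y ≠ t₀ := by
        rintro rfl
        exact hnotin e hne (by rw [hxy]; exact Sym2.mem_mk_right x y)
      have hdiag' : (Sym2.map h (T.ends e)).IsDiag := hdiag
      rw [hxy, Sym2.map_pair_eq, hval x hx, hval y hy, Sym2.mk_isDiag_iff] at hdiag'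
      exact T.loopless e (by rw [hxy, Sym2.mk_isDiag_iff]; exact congrArg Subtype.val hdiag')⟩
    with hT'
  have hT'ends : ∀ e : {e : ET // e ≠ j₀}, T'.ends e = (T.ends e.1).map h := fun _ => rfl
  -- cardinalities
  have hcardET' : Fintype.card {e : ET // e ≠ j₀} = n := by
    rw [Fintype.card_subtype_compl, hcard, Fintype.card_subtype_eq]
    omega
  have hcardVT : Fintype.card VT = n + 2 := by
    have := hT.2
    rw [Nat.card_eq_fintype_card, Nat.card_eq_fintype_card, hcard] at this
    omega
  have hcardVT' : Fintype.card {t : VT // t ≠ t₀} = n + 1 := by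
    rw [Fintype.card_subtype_compl, hcardVT, Fintype.card_subtype_eq]
    omega
  -- connectivity of T'
  have hkey : ∀ x y : VT, T.Adj Set.univ x y →
      Relation.ReflTransGen (T'.Adj Set.univ) (h x) (h y) := by
    rintro x y ⟨e, -, he⟩
    by_cases hej : e = j₀
    · subst hej
      rw [hj₀ends] at he
      have heq : h x = h y := by
        rcases Sym2.eq_iff.1 he with ⟨h1, h2⟩ | ⟨h1, h2⟩
        · rw [← h1, ← h2, hval s hst₀, hvalt₀]
        · rw [← h1, ← h2, hvalt₀, hval s hst₀]
      rw [heq]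
    · exact Relation.ReflTransGen.single
        ⟨⟨e, hej⟩, trivial, by rw [hT'ends, he, Sym2.map_pair_eq]⟩
  have hlift : ∀ x y : VT, Relation.ReflTransGen (T.Adj Set.univ) x y →
      Relation.ReflTransGen (T'.Adj Set.univ) (h x) (h y) := by
    intro x y hxy
    induction hxy with
    | refl => exact Relation.ReflTransGen.refl
    | tail _ hstep ihp => exact ihp.trans (hkey _ _ hstep)
  have hconn' : T'.Connected := by
    intro v w
    have := hlift v.1 w.1 (hT.1 v.1 w.1)
    rwa [hval v.1 v.2, hval w.1 w.2, Subtype.eta, Subtype.eta] at this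
  have hT'tree : T'.IsTree := by
    refine ⟨hconn', ?_⟩
    rw [Nat.card_eq_fintype_card, Nat.card_eq_fintype_card, hcardET', hcardVT']
  -- bipartition of T'
  have hT'bip : T'.IsBipartition {t | t.1 ∈ TA} {t | t.1 ∈ TB} := by
    refine ⟨?_, ?_, ?_⟩
    · rw [Set.disjoint_left]
      intro t ht ht'
      exact Set.disjoint_left.1 hTbip.1 ht ht'
    · ext t
      simp only [Set.mem_union, Set.mem_setOf_eq, Set.mem_univ, iff_true]
      have := hTbip.2.1
      have ht : t.1 ∈ TA ∪ TB := this ▸ Set.mem_univ t.1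
      exact ht
    · rintro ⟨e, hne⟩
      obtain ⟨a, ha, b, hb, hab⟩ := hTbip.2.2 e
      have haz : a ≠ t₀ := by
        rintro rfl
        exact hnotin e hne (by rw [hab]; exact Sym2.mem_mk_left a b)
      have hbz : b ≠ t₀ := by
        rintro rfl
        exact hnotin e hne (by rw [hab]; exact Sym2.mem_mk_right a b)
      exact ⟨⟨a, haz⟩, ha, ⟨b, hbz⟩, hb,
        by rw [hT'ends, hab, Sym2.map_pair_eq, hval a haz, hval b hbz]⟩
  -- membership transfer
  have hmem : ∀ (t : VT) (ht : t ≠ t₀) (e : ET) (he : e ≠ j₀),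
      ((⟨t, ht⟩ : {t : VT // t ≠ t₀}) ∈ T'.ends ⟨e, he⟩ ↔ t ∈ T.ends e) := by
    intro t ht e he
    rw [hT'ends, Sym2.mem_map]
    constructor
    · rintro ⟨b, hb, hbt⟩
      have hbz : b ≠ t₀ := by
        rintro rfl
        exact hnotin e he hb
      rw [hval b hbz] at hbt
      have : b = t := congrArg Subtype.val hbt
      exact this ▸ hb
    · intro hmem
      exact ⟨t, hmem, hval t ht⟩
  -- the reduced graph G'
  set G' : Multigraph V {e : E // c e ≠ j₀} :=
    ⟨fun e => G.ends e.1, fun e => G.loopless e.1⟩ with hG'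
  set c' : {e : E // c e ≠ j₀} → {e : ET // e ≠ j₀} := fun e => ⟨c e.1, e.2⟩ with hc'
  have hG'bip : G'.IsBipartition A B :=
    ⟨hGbip.1, hGbip.2.1, fun e => hGbip.2.2 e.1⟩
  have hdegcol : ∀ (j : {e : ET // e ≠ j₀}) (v : V),
      G'.degCol c' j v = G.degCol c j.1 v := by
    intro j v
    apply Nat.card_congr
    refine ⟨fun x => ⟨x.1.1, congrArg Subtype.val x.2.1, x.2.2⟩,
      fun y => ⟨⟨y.1, by rw [y.2.1]; exact j.2⟩, Subtype.ext y.2.1, y.2.2⟩, ?_, ?_⟩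
    · intro x
      apply Subtype.ext; apply Subtype.ext; rfl
    · intro y
      apply Subtype.ext; rfl
  have hA' : ∀ v ∈ A, ∀ t ∈ {t : {t : VT // t ≠ t₀} | t.1 ∈ TA}, ∀ j k,
      t ∈ T'.ends j → t ∈ T'.ends k → G'.degCol c' j v = G'.degCol c' k v := by
    rintro v hv ⟨t, ht⟩ hta j k hj hk
    rw [hdegcol, hdegcol]
    exact hA v hv t hta j.1 k.1 ((hmem t ht j.1 j.2).1 (by exact hj))
      ((hmem t ht k.1 k.2).1 (by exact hk))
  have hB' : ∀ v ∈ B, ∀ t ∈ {t : {t : VT // t ≠ t₀} | t.1 ∈ TB}, ∀ j k,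
      t ∈ T'.ends j → t ∈ T'.ends k → G'.degCol c' j v = G'.degCol c' k v := by
    rintro v hv ⟨t, ht⟩ htb j k hj hk
    rw [hdegcol, hdegcol]
    exact hB v hv t htb j.1 k.1 ((hmem t ht j.1 j.2).1 (by exact hj))
      ((hmem t ht k.1 k.2).1 (by exact hk))
  -- apply the induction hypothesis
  obtain ⟨P', hPart', hCopies'⟩ := ih T' {t | t.1 ∈ TA} {t | t.1 ∈ TB} G' A B
    hcardET' hT'tree hT'bip hG'bip c' hA' hB'
  -- choose the copy data for each class
  choose f g hfA hfB hcol hends using fun S : {S : Set {e : E // c e ≠ j₀} // S ∈ P'} =>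
    hCopies' S.1 S.2
  -- a second edge j₁ at s
  obtain ⟨w, hw⟩ := Fintype.exists_ne_of_one_lt_card
    (by rw [hcardVT']; omega) (⟨s, hst₀⟩ : {t : VT // t ≠ t₀})
  rcases (hconn' ⟨s, hst₀⟩ w).cases_head with heq | ⟨x, ⟨j₁', -, hj₁ends⟩, -⟩
  · exact absurd heq.symm hw
  have hxB : x.1 ∈ TB := by
    obtain ⟨a', ha', b', hb', hab'⟩ := hT'bip.2.2 j₁'
    rw [hab'] at hj₁ends
    rcases Sym2.eq_iff.1 hj₁ends with ⟨h1, h2⟩ | ⟨h1, h2⟩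
    · rw [h2] at hb'
      exact hb'
    · rw [h1] at ha'
      exact ((Set.disjoint_left.1 hTbip.1 hsA) (by rw [h2] at hb'; exact hb')).elim
  have hsj₁ : s ∈ T.ends j₁'.1 :=
    (hmem s hst₀ j₁'.1 j₁'.2).1 (by rw [hj₁ends]; exact Sym2.mem_mk_left _ _)
  have hsj₀ : s ∈ T.ends j₀ := by rw [hj₀ends]; exact Sym2.mem_mk_left _ _
  -- canonical ends of edges of G
  choose aendf haend bendf hbend hends0 using hGbip.2.2
  have hauniq : ∀ (e : E) (v : V), v ∈ A → v ∈ G.ends e → v = aendf e := by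
    intro e v hv hve
    rw [hends0 e, Sym2.mem_iff] at hve
    rcases hve with h1 | h1
    · exact h1
    · exact ((Set.disjoint_left.1 hGbip.1 (h1 ▸ hv)) (hbend e)).elim
  have hvA : ∀ S : {S // S ∈ P'}, f S ⟨s, hst₀⟩ ∈ A :=
    fun S => hfA S ⟨s, hst₀⟩ hsA
  have hΦc : ∀ S : {S // S ∈ P'}, c ((g S j₁').1).1 = j₁'.1 :=
    fun S => congrArg Subtype.val (hcol S j₁')
  have hΦends : ∀ S : {S // S ∈ P'},
      G.ends ((g S j₁').1).1 = s(f S ⟨s, hst₀⟩, f S x) := by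
    intro S
    have h9 := hends S j₁'
    rw [hj₁ends, Sym2.map_pair_eq] at h9
    exact h9
  -- fiberwise bijections between classes at v and j₀-edges at v
  have hfib : ∀ v : {v : V // v ∈ A},
      Nonempty ({S : {S // S ∈ P'} // f S ⟨s, hst₀⟩ = v.1}
        ≃ {e : {e : E // c e = j₀} // aendf e.1 = v.1}) := by
    intro v
    have eqv1 : {S : {S // S ∈ P'} // f S ⟨s, hst₀⟩ = v.1}
        ≃ {e : E // c e = j₁'.1 ∧ v.1 ∈ G.ends e} := by
      refine Equiv.ofBijective (fun S => ⟨((g S.1 j₁').1).1, hΦc S.1,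
        by rw [hΦends S.1, S.2]; exact Sym2.mem_mk_left _ _⟩) ⟨?_, ?_⟩
      · intro S₁ S₂ hEq
        have h3p := Subtype.ext_iff.mp hEq
        have h3 : ((g S₁.1 j₁').1).1 = ((g S₂.1 j₁').1).1 := h3p
        have h4 : (g S₁.1 j₁').1 = (g S₂.1 j₁').1 := Subtype.ext h3
        obtain ⟨Q, -, hQuniq⟩ := hPart'.2 ((g S₁.1 j₁').1)
        have h5 : S₁.1.1 = Q := hQuniq S₁.1.1 ⟨S₁.1.2, (g S₁.1 j₁').2⟩
        have h6 : S₂.1.1 = Q := hQuniq S₂.1.1 ⟨S₂.1.2, h4 ▸ (g S₂.1 j₁').2⟩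
        exact Subtype.ext (Subtype.ext (h5.trans h6.symm))
      · rintro ⟨e, he1, he2⟩
        have he' : c e ≠ j₀ := by rw [he1]; exact j₁'.2
        obtain ⟨Q, ⟨hQP, hQmem⟩, -⟩ := hPart'.2 ⟨e, he'⟩
        have hginv : g ⟨Q, hQP⟩ j₁' = ⟨⟨e, he'⟩, hQmem⟩ := by
          have h5 := hcol ⟨Q, hQP⟩ ((g ⟨Q, hQP⟩).symm ⟨⟨e, he'⟩, hQmem⟩)
          rw [Equiv.apply_symm_apply] at h5
          have h6 : (g ⟨Q, hQP⟩).symm ⟨⟨e, he'⟩, hQmem⟩ = j₁' := by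
            rw [← h5]
            exact Subtype.ext he1
          rw [← h6, Equiv.apply_symm_apply]
        have hvert : f ⟨Q, hQP⟩ ⟨s, hst₀⟩ = v.1 := by
          have h7 := hΦends ⟨Q, hQP⟩
          rw [hginv] at h7
          have h8 := he2
          rw [h7, Sym2.mem_iff] at h8
          rcases h8 with h8 | h8
          · exact h8.symm
          · exact ((Set.disjoint_left.1 hGbip.1 (h8 ▸ v.2)) (hfB ⟨Q, hQP⟩ x hxB)).elim
        refine ⟨⟨⟨Q, hQP⟩, hvert⟩, Subtype.ext ?_⟩
        show ((g ⟨Q, hQP⟩ j₁').1).1 = e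
        rw [hginv]
    have eqv2 : {e : E // c e = j₀ ∧ v.1 ∈ G.ends e}
        ≃ {e : {e : E // c e = j₀} // aendf e.1 = v.1} := by
      refine ⟨fun z => ⟨⟨z.1, z.2.1⟩, (hauniq z.1 v.1 v.2 z.2.2).symm⟩,
        fun z => ⟨z.1.1, z.1.2, ?_⟩, fun z => ?_, fun z => ?_⟩
      · have h20 : aendf z.1.1 ∈ G.ends z.1.1 := by
          rw [hends0]
          exact Sym2.mem_mk_left _ _
        rw [z.2] at h20
        exact h20
      · apply Subtype.ext
        rfl
      · apply Subtype.ext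
        apply Subtype.ext
        rfl
    have hchain : Nat.card {S : {S // S ∈ P'} // f S ⟨s, hst₀⟩ = v.1}
        = Nat.card {e : {e : E // c e = j₀} // aendf e.1 = v.1} := by
      calc Nat.card {S : {S // S ∈ P'} // f S ⟨s, hst₀⟩ = v.1}
          = Nat.card {e : E // c e = j₁'.1 ∧ v.1 ∈ G.ends e} := Nat.card_congr eqv1
        _ = Nat.card {e : E // c e = j₀ ∧ v.1 ∈ G.ends e} :=
            hA v.1 v.2 s hsA j₁'.1 j₀ hsj₁ hsj₀
        _ = Nat.card {e : {e : E // c e = j₀} // aendf e.1 = v.1} := Nat.card_congr eqv2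
    rw [Nat.card_eq_fintype_card, Nat.card_eq_fintype_card] at hchain
    exact Fintype.card_eq.1 hchain
  have hfib' : ∀ v : {v : V // v ∈ A},
      Nonempty ({S : {S // S ∈ P'} // (⟨f S ⟨s, hst₀⟩, hvA S⟩ : {v : V // v ∈ A}) = v}
        ≃ {e : {e : E // c e = j₀} // (⟨aendf e.1, haend e.1⟩ : {v : V // v ∈ A}) = v}) := by
    intro v
    obtain ⟨eqv⟩ := hfib v
    exact ⟨((Equiv.subtypeEquivRight (fun S => Subtype.ext_iff)).trans eqv).trans
      (Equiv.subtypeEquivRight (fun e => Subtype.ext_iff)).symm⟩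
  obtain ⟨μ, hμprop⟩ : ∃ μ : {S // S ∈ P'} ≃ {e : E // c e = j₀},
      ∀ S, aendf (μ S).1 = f S ⟨s, hst₀⟩ :=
    ⟨Equiv.ofFiberEquiv (fun v => (hfib' v).some),
      fun S => congrArg Subtype.val (Equiv.ofFiberEquiv_map (fun v => (hfib' v).some) S)⟩
  -- the final partition
  refine ⟨{X : Set E | ∃ S : {S // S ∈ P'}, X = (Subtype.val '' S.1) ∪ {(μ S).1}},
    ⟨?_, ?_⟩, ?_⟩
  · rintro ⟨S, hS⟩
    have hmem0 : (μ S).1 ∈ (∅ : Set E) := by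
      rw [hS]
      exact Set.mem_union_right _ rfl
    exact hmem0
  · intro e
    by_cases hc : c e = j₀
    · refine ⟨(Subtype.val '' (μ.symm ⟨e, hc⟩).1) ∪ {(μ (μ.symm ⟨e, hc⟩)).1},
        ⟨⟨μ.symm ⟨e, hc⟩, rfl⟩, ?_⟩, ?_⟩
      · apply Set.mem_union_right
        rw [Equiv.apply_symm_apply]
        rfl
      · rintro X ⟨⟨S'', rfl⟩, heX⟩
        rcases heX with hl | hr
        · obtain ⟨y, hy, hyv⟩ := hl
          exact absurd (hyv ▸ y.2) (not_not_intro hc)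
        · have h10 : μ S'' = ⟨e, hc⟩ := Subtype.ext (Set.mem_singleton_iff.1 hr).symm
          have hS : S'' = μ.symm ⟨e, hc⟩ := by rw [← h10, Equiv.symm_apply_apply]
          rw [hS]
    · obtain ⟨Q, ⟨hQP, hQmem⟩, hQuniq⟩ := hPart'.2 ⟨e, hc⟩
      refine ⟨(Subtype.val '' Q) ∪ {(μ ⟨Q, hQP⟩).1},
        ⟨⟨⟨Q, hQP⟩, rfl⟩, Set.mem_union_left _ ⟨⟨e, hc⟩, hQmem, rfl⟩⟩, ?_⟩
      rintro X ⟨⟨S'', rfl⟩, heX⟩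
      rcases heX with hl | hr
      · obtain ⟨y, hy, hyv⟩ := hl
        have hye : y = ⟨e, hc⟩ := Subtype.ext hyv
        have h11 : S''.1 = Q := hQuniq S''.1 ⟨S''.2, hye ▸ hy⟩
        have hS : S'' = ⟨Q, hQP⟩ := Subtype.ext h11
        rw [hS]
      · exact absurd (by rw [Set.mem_singleton_iff.1 hr]; exact (μ S'').2) hc
  -- each class is a homomorphic copy
  · rintro X ⟨S, rfl⟩
    let gfn : ET → ↥((Subtype.val '' S.1) ∪ {(μ S).1}) := fun k =>
      if hk : k = j₀ then ⟨(μ S).1, Set.mem_union_right _ rfl⟩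
      else ⟨((g S ⟨k, hk⟩).1).1,
        Set.mem_union_left _ ⟨(g S ⟨k, hk⟩).1, (g S ⟨k, hk⟩).2, rfl⟩⟩
    have hgfn_pos : gfn j₀ = ⟨(μ S).1, Set.mem_union_right _ rfl⟩ := dif_pos rfl
    have hgfn_neg : ∀ (k : ET) (hk : k ≠ j₀), gfn k = ⟨((g S ⟨k, hk⟩).1).1,
        Set.mem_union_left _ ⟨(g S ⟨k, hk⟩).1, (g S ⟨k, hk⟩).2, rfl⟩⟩ :=
      fun k hk => dif_neg hk
    have hgb : Function.Bijective gfn := by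
      constructor
      · intro k₁ k₂ hk
        by_cases h1 : k₁ = j₀ <;> by_cases h2 : k₂ = j₀
        · rw [h1, h2]
        · exfalso
          rw [h1, hgfn_pos, hgfn_neg k₂ h2] at hk
          have h12p := Subtype.ext_iff.mp hk
          have h12 : (μ S).1 = ((g S ⟨k₂, h2⟩).1).1 := h12p
          have hc2 : c ((g S ⟨k₂, h2⟩).1).1 = k₂ := congrArg Subtype.val (hcol S ⟨k₂, h2⟩)
          rw [← h12, (μ S).2] at hc2
          exact h2 hc2.symm
        · exfalso
          rw [h2, hgfn_pos, hgfn_neg k₁ h1] at hk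
          have h12p := Subtype.ext_iff.mp hk
          have h12 : ((g S ⟨k₁, h1⟩).1).1 = (μ S).1 := h12p
          have hc2 : c ((g S ⟨k₁, h1⟩).1).1 = k₁ := congrArg Subtype.val (hcol S ⟨k₁, h1⟩)
          rw [h12, (μ S).2] at hc2
          exact h1 hc2.symm
        · rw [hgfn_neg k₁ h1, hgfn_neg k₂ h2] at hk
          have h3p := Subtype.ext_iff.mp hk
          have h3 : ((g S ⟨k₁, h1⟩).1).1 = ((g S ⟨k₂, h2⟩).1).1 := h3p
          have h4 : (⟨k₁, h1⟩ : {e : ET // e ≠ j₀}) = ⟨k₂, h2⟩ :=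
            (g S).injective (Subtype.ext (Subtype.ext h3))
          exact congrArg Subtype.val h4
      · rintro ⟨z, hz⟩
        rcases hz with hz | hz
        · obtain ⟨y, hy, hyz⟩ := hz
          refine ⟨((g S).symm ⟨y, hy⟩).1, ?_⟩
          rw [hgfn_neg _ ((g S).symm ⟨y, hy⟩).2]
          apply Subtype.ext
          exact (congrArg (fun q => Subtype.val (Subtype.val q))
            (Equiv.apply_symm_apply (g S) ⟨y, hy⟩)).trans hyz
        · refine ⟨j₀, ?_⟩
          rw [hgfn_pos]
          exact Subtype.ext (Set.mem_singleton_iff.1 hz).symm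
    let fnw : VT → V := fun t => if ht : t = t₀ then bendf (μ S).1 else f S ⟨t, ht⟩
    have hfnw_pos : fnw t₀ = bendf (μ S).1 := dif_pos rfl
    have hfnw_neg : ∀ (t : VT) (ht : t ≠ t₀), fnw t = f S ⟨t, ht⟩ := fun t ht => dif_neg ht
    refine ⟨fnw, Equiv.ofBijective gfn hgb, ?_, ?_, ?_, ?_⟩
    · intro t ht
      have htne : t ≠ t₀ := fun hh' => Set.disjoint_left.1 hTbip.1 ht (hh' ▸ ht₀)
      rw [hfnw_neg t htne]
      exact hfA S ⟨t, htne⟩ ht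
    · intro t ht
      by_cases htt : t = t₀
      · rw [htt, hfnw_pos]
        exact hbend _
      · rw [hfnw_neg t htt]
        exact hfB S ⟨t, htt⟩ ht
    · intro k
      show c (gfn k).1 = k
      by_cases hk : k = j₀
      · rw [hk, hgfn_pos]
        exact (μ S).2
      · rw [hgfn_neg k hk]
        exact congrArg Subtype.val (hcol S ⟨k, hk⟩)
    · intro k
      show G.ends (gfn k).1 = Sym2.map fnw (T.ends k)
      by_cases hk : k = j₀
      · rw [hk, hgfn_pos, hj₀ends, Sym2.map_pair_eq, hfnw_neg s hst₀, hfnw_pos]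
        rw [hends0 (μ S).1, hμprop S]
      · rw [hgfn_neg k hk]
        have h9 := hends S ⟨k, hk⟩
        refine Eq.trans h9 ?_
        rw [hT'ends, Sym2.map_map]
        refine Sym2.map_congr (fun t ht => ?_)
        have htne : t ≠ t₀ := fun heq => hnotin k hk (heq ▸ ht)
        show f S (h t) = fnw t
        rw [hval t htne, hfnw_neg t htne]

lemma stmt_succ (n : ℕ) (ih : Stmt n) : Stmt (n + 1) := by
  intro VT ET V E _ _ _ _ T TA TB G A B hcard hT hTbip hGbip c hA hB
  obtain ⟨t₀, hleaf⟩ := exists_leaf T hT (by rw [hcard]; omega)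
  have ht₀mem : t₀ ∈ TA ∪ TB := hTbip.2.1 ▸ Set.mem_univ t₀
  rcases ht₀mem with hta | htb
  · obtain ⟨P, hPart, hCop⟩ := step_core n ih T TB TA G B A hcard hT
      (bipartition_symm hTbip) (bipartition_symm hGbip) t₀ hta hleaf c hB hA
    refine ⟨P, hPart, fun S hS => ?_⟩
    obtain ⟨f, g, h1, h2, h3, h4⟩ := hCop S hS
    exact ⟨f, g, h2, h1, h3, h4⟩
  · exact step_core n ih T TA TB G A B hcard hT hTbip hGbip t₀ htb hleaf c hA hB

lemma stmt_all : ∀ n, Stmt n := by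
  intro n
  induction n with
  | zero => exact stmt_zero
  | succ n ih => exact stmt_succ n ih

end MGAux

open Multigraph in
/-- if a bipartite graph `G` admits a `T`-equitable edge-colouring
(colours = edges of the tree `T`), then `G` has a `T*`-decomposition. -/
theorem equitable_colouring_gives_homCopy_decomposition
    {VT ET V E : Type} [Fintype VT] [Fintype ET] [Fintype V] [Fintype E]
    (T : Multigraph VT ET) (TA TB : Set VT)
    (G : Multigraph V E) (A B : Set V)
    (hT : T.IsTree) (hTbip : T.IsBipartition TA TB)
    (hleaf : ∃ t ∈ TB, T.deg t = 1)
    (hGbip : G.IsBipartition A B)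
    (c : E → ET)
    (hA : ∀ v ∈ A, ∀ t ∈ TA, ∀ j k : ET, t ∈ T.ends j → t ∈ T.ends k →
        G.degCol c j v = G.degCol c k v)
    (hB : ∀ v ∈ B, ∀ t ∈ TB, ∀ j k : ET, t ∈ T.ends j → t ∈ T.ends k →
        G.degCol c j v = G.degCol c k v) :
    T.HomCopyDecomposition G := by
  obtain ⟨P, hPart, hCop⟩ := MGAux.stmt_all (Fintype.card ET) T TA TB G A B rfl hT
    hTbip hGbip c hA hB
  refine ⟨P, hPart, fun S hS => ?_⟩
  obtain ⟨f, g, _, _, _, h4⟩ := hCop S hS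
  exact ⟨f, g, h4⟩
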